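/- arXiv:2003.06057 — 3 statements merged into one kernel-verified Lean document; each statement's English description precedes it below -/
import Mathlib

section
/- For every integer m ≥ 1, there exists an irreducible monic polynomial f ∈ ℤ[X] such that ℚ[X]/(f) is a Galois extension of ℚ and such that for every prime number p not dividing the discriminant disc(f), the reduction f̄ ∈ 𝔽_p[X] has at least m pairwise distinct monic irreducible factors. -/
open Polynomial

section AuxLemmas

lemma succ_le_two_pow (k : ℕ) : k + 1 ≤ 2 ^ k := by
  induction k with
  | zero => simp
  | succ n ih => calc n + 2 ≤ 2 ^ n + 2 ^ n := by nlinarith [Nat.one_le_two_pow (n := n)]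
                 _ = 2 ^ (n+1) := by ring

lemma exists_odd_primes (k : ℕ) :
    ∃ S : Finset ℕ, S.card = k ∧ ∀ q ∈ S, q.Prime ∧ 3 ≤ q := by
  induction k with
  | zero => exact ⟨∅, by simp, by simp⟩
  | succ n ih =>
    obtain ⟨S, hcard, hS⟩ := ih
    obtain ⟨q, hqle, hq⟩ := Nat.exists_infinite_primes (S.sup id + 3)
    have hqS : q ∉ S := by
      intro hmem
      have : q ≤ S.sup id := Finset.le_sup (f := id) hmem
      omega
    refine ⟨insert q S, ?_, ?_⟩
    · rw [Finset.card_insert_of_notMem hqS, hcard]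
    · intro x hx
      rcases Finset.mem_insert.mp hx with rfl | hx
      · exact ⟨hq, by omega⟩
      · exact hS x hx

lemma totient_prod_primes {T : Finset ℕ} (h : ∀ q ∈ T, q.Prime) :
    Nat.totient (∏ q ∈ T, q) = ∏ q ∈ T, (q - 1) := by
  classical
  induction T using Finset.induction with
  | empty => simp
  | insert a T' ha ih =>
    rw [Finset.prod_insert ha, Finset.prod_insert ha]
    have hcop : Nat.Coprime a (∏ q ∈ T', q) := by
      apply Nat.Coprime.prod_right
      intro q hq
      exact (Nat.coprime_primes (h a (Finset.mem_insert_self a T'))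
        (h q (Finset.mem_insert_of_mem hq))).mpr (by rintro rfl; exact ha hq)
    rw [Nat.totient_mul hcop, Nat.totient_prime (h a (Finset.mem_insert_self a T')),
      ih (fun q hq => h q (Finset.mem_insert_of_mem hq))]


lemma natDegree_le_of_dvd_cyclotomic {p : ℕ} [hp : Fact p.Prime] {N e : ℕ}
    (hpN : ¬ p ∣ N) (he : 0 < e) (hdvd : N ∣ p ^ e - 1)
    {g : Polynomial (ZMod p)} (hg : Irreducible g)
    (hgd : g ∣ Polynomial.cyclotomic N (ZMod p)) : g.natDegree ≤ e := by
  haveI := Fact.mk hg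
  have hg0 : g ≠ 0 := hg.ne_zero
  set K := AdjoinRoot g with hK
  let pb := AdjoinRoot.powerBasis hg0
  haveI : Module.Finite (ZMod p) K := Module.Finite.of_basis pb.basis
  haveI : FiniteDimensional (ZMod p) K := inferInstance
  haveI : Finite K := Module.finite_of_finite (ZMod p)
  haveI : Fintype K := Fintype.ofFinite K
  have hcharK : CharP K p := charP_of_injective_algebraMap
    (algebraMap (ZMod p) K).injective p
  have hcard : Fintype.card K = p ^ g.natDegree := by
    rw [Module.card_eq_pow_finrank (K := ZMod p) (V := K), ZMod.card, pb.finrank,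
      AdjoinRoot.powerBasis_dim]
  set ζ := AdjoinRoot.root g with hζdef
  have hζ : Polynomial.aeval ζ (cyclotomic N (ZMod p)) = 0 := by
    rw [AdjoinRoot.aeval_eq, AdjoinRoot.mk_eq_zero]; exact hgd
  have hroot : (cyclotomic N K).IsRoot ζ := by
    rw [← map_cyclotomic _ (algebraMap (ZMod p) K), Polynomial.IsRoot, Polynomial.eval_map,
      ← Polynomial.aeval_def]
    exact hζ
  haveI : NeZero (N : K) := ⟨fun h => hpN ((CharP.cast_eq_zero_iff K p N).mp h)⟩
  have hprim : IsPrimitiveRoot ζ N := (Polynomial.isRoot_cyclotomic_iff).mp hroot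
  have hζN : ζ ^ N = 1 := hprim.pow_eq_one
  have hppos : 1 ≤ p ^ e := Nat.one_le_pow _ _ hp.out.pos
  have hζpe : ζ ^ (p ^ e) = ζ := by
    obtain ⟨k, hk⟩ := hdvd
    have h1 : ζ ^ (p ^ e - 1) = 1 := by rw [hk, pow_mul, hζN, one_pow]
    calc ζ ^ (p ^ e) = ζ ^ (p ^ e - 1 + 1) := by rw [Nat.sub_add_cancel hppos]
    _ = ζ := by rw [pow_succ, h1, one_mul]
  haveI : ExpChar K p := ExpChar.prime hp.out
  set F := iterateFrobenius K p e with hF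
  have hFz : ∀ x : K, F x = x := by
    intro x
    obtain ⟨Q, rfl⟩ := AdjoinRoot.mk_surjective x
    rw [← AdjoinRoot.aeval_eq, Polynomial.aeval_def, Polynomial.hom_eval₂]
    have h1 : F.comp (algebraMap (ZMod p) K) = algebraMap (ZMod p) K := by
      ext r
      simp only [RingHom.comp_apply, hF, iterateFrobenius_def, ← map_pow]
      rw [ZMod.pow_card_pow]
    have h2 : F ζ = ζ := by rw [hF, iterateFrobenius_def]; exact hζpe
    rw [h1, h2]
  -- every element of K is a root of X ^ p ^ e - X
  set Q : Polynomial K := X ^ (p ^ e) - X with hQ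
  have h1lt : 1 < p ^ e := Nat.one_lt_pow he.ne' hp.out.one_lt
  have hdeg : Q.natDegree = p ^ e := by
    rw [hQ, natDegree_sub_eq_left_of_natDegree_lt (by simpa using h1lt)]
    simp
  have hQ0 : Q ≠ 0 := by
    intro h
    rw [h] at hdeg
    simp at hdeg
    omega
  have hall : ∀ x : K, Q.IsRoot x := by
    intro x
    have := hFz x
    rw [hF, iterateFrobenius_def] at this
    simp [hQ, Polynomial.IsRoot, this]
  have hsub : (Finset.univ : Finset K) ⊆ Q.roots.toFinset := by
    intro x _
    rw [Multiset.mem_toFinset, Polynomial.mem_roots hQ0]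
    exact hall x
  have hcard2 : Fintype.card K ≤ p ^ e := by
    calc Fintype.card K = (Finset.univ : Finset K).card := rfl
    _ ≤ Q.roots.toFinset.card := Finset.card_le_card hsub
    _ ≤ Multiset.card Q.roots := Multiset.toFinset_card_le _
    _ ≤ Q.natDegree := Polynomial.card_roots' Q
    _ = p ^ e := hdeg
  rw [hcard] at hcard2
  exact (Nat.pow_le_pow_iff_right hp.out.one_lt).mp hcard2

lemma many_factors {p : ℕ} [hp : Fact p.Prime] {T : Finset ℕ}
    (hT : ∀ q ∈ T, q.Prime ∧ 3 ≤ q) (hpT : p ∉ T) (hTne : T.Nonempty) :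
    ∃ s : Finset (Polynomial (ZMod p)), 2 ^ (T.card - 1) ≤ s.card ∧
      ∀ g ∈ s, g.Monic ∧ Irreducible g ∧
        g ∣ Polynomial.cyclotomic (∏ q ∈ T, q) (ZMod p) := by
  classical
  set N := ∏ q ∈ T, q with hNdef
  have hN : 0 < N := Finset.prod_pos fun q hq => (hT q hq).1.pos
  have hpN : ¬ p ∣ N := by
    intro h
    obtain ⟨q, hq, hpq⟩ := (hp.out.prime.dvd_finset_prod_iff id).mp h
    exact hpT ((Nat.prime_dvd_prime_iff_eq hp.out (hT q hq).1).mp hpq ▸ hq)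
  set c := T.card - 1 with hc
  set P := ∏ q ∈ T, (q - 1) with hP
  have hPpos : 0 < P := Finset.prod_pos fun q hq => by have := (hT q hq).2; omega
  have h2dvd : ∀ q ∈ T, 2 ∣ q - 1 := by
    intro q hq
    have h3 := (hT q hq).2
    have hodd : Odd q := (hT q hq).1.odd_of_ne_two (by omega)
    obtain ⟨k, hk⟩ := hodd
    omega
  have h2c : ∀ q ∈ T, (q - 1) * 2 ^ c ∣ P := by
    intro q hq
    have herase : P = (q - 1) * ∏ x ∈ T.erase q, (x - 1) :=
      (Finset.mul_prod_erase T _ hq).symm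
    have h2 : (2 : ℕ) ^ c ∣ ∏ x ∈ T.erase q, (x - 1) := by
      have : (∏ _x ∈ T.erase q, 2) ∣ ∏ x ∈ T.erase q, (x - 1) :=
        Finset.prod_dvd_prod_of_dvd _ _ fun x hx => h2dvd x (Finset.mem_of_mem_erase hx)
      rwa [Finset.prod_const, Finset.card_erase_of_mem hq] at this
    rw [herase]
    exact mul_dvd_mul_left _ h2
  obtain ⟨q₀, hq₀⟩ := hTne
  have h2P : 2 ^ c ∣ P := (dvd_mul_left _ _).trans (h2c q₀ hq₀)
  set e := P / 2 ^ c with he'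
  have hPe : P = 2 ^ c * e := (Nat.mul_div_cancel' h2P).symm
  have he : 0 < e := by
    rcases Nat.eq_zero_or_pos e with h | h
    · rw [h, mul_zero] at hPe; omega
    · exact h
  have hqe : ∀ q ∈ T, (q - 1) ∣ e := by
    intro q hq
    have h1 : 2 ^ c * (q - 1) ∣ 2 ^ c * e := by
      rw [mul_comm (2 ^ c) (q - 1), ← hPe]; exact h2c q hq
    exact (mul_dvd_mul_iff_left (a := (2:ℕ) ^ c) (by positivity)).mp h1
  have hNdvd : N ∣ p ^ e - 1 := by
    apply Finset.prod_primes_dvd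
    · exact fun q hq => (hT q hq).1.prime
    · intro q hq
      haveI : Fact q.Prime := ⟨(hT q hq).1⟩
      have hqp : q ≠ p := fun h => hpT (h ▸ hq)
      have hpq0 : (p : ZMod q) ≠ 0 := by
        rw [Ne, ZMod.natCast_eq_zero_iff]
        intro hd
        exact hqp ((Nat.prime_dvd_prime_iff_eq (hT q hq).1 hp.out).mp hd)
      obtain ⟨k, hk⟩ := hqe q hq
      have h1 : ((p ^ e : ℕ) : ZMod q) = ((1 : ℕ) : ZMod q) := by
        push_cast
        rw [hk, pow_mul, ZMod.pow_card_sub_one_eq_one hpq0, one_pow]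
      have h2 : (1 : ℕ) ≡ p ^ e [MOD q] := ((ZMod.natCast_eq_natCast_iff _ _ _).mp h1).symm
      exact (Nat.modEq_iff_dvd' (Nat.one_le_pow _ _ hp.out.pos)).mp h2
  -- the cyclotomic polynomial mod p
  set h := Polynomial.cyclotomic N (ZMod p) with hh
  have hh0 : h ≠ 0 := cyclotomic_ne_zero N (ZMod p)
  have hNp : (N : ZMod p) ≠ 0 := by
    rw [Ne, ZMod.natCast_eq_zero_iff]; exact hpN
  have hsepX : (X ^ N - 1 : (ZMod p)[X]).Separable := X_pow_sub_one_separable_iff.mpr hNp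
  have hdvdX : h ∣ (X ^ N - 1 : (ZMod p)[X]) := cyclotomic.dvd_X_pow_sub_one N (ZMod p)
  have hsep : h.Separable := hsepX.of_dvd hdvdX
  have hsf : Squarefree h := hsep.squarefree
  set factors := UniqueFactorizationMonoid.normalizedFactors h with hfactors
  have hmem_monic : ∀ x ∈ factors, x.Monic := by
    intro x hx
    have hx0 : x ≠ 0 :=
      (UniqueFactorizationMonoid.irreducible_of_normalized_factor x hx).ne_zero
    have := UniqueFactorizationMonoid.normalize_normalized_factor x hx
    rw [← this]
    exact Polynomial.monic_normalize hx0
  have hprodeq : factors.prod = h := by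
    apply Polynomial.eq_of_monic_of_associated
    · have := Polynomial.monic_multiset_prod_of_monic factors id hmem_monic
      simpa using this
    · exact cyclotomic.monic N (ZMod p)
    · exact UniqueFactorizationMonoid.prod_normalizedFactors hh0
  have hdegsum : h.natDegree = (factors.map natDegree).sum := by
    rw [← hprodeq, Polynomial.natDegree_multiset_prod_of_monic _ hmem_monic]
  have hdeg_le : ∀ d ∈ factors.map natDegree, d ≤ e := by
    intro d hd
    obtain ⟨x, hx, rfl⟩ := Multiset.mem_map.mp hd
    exact natDegree_le_of_dvd_cyclotomic hpN he hNdvd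
      (UniqueFactorizationMonoid.irreducible_of_normalized_factor x hx)
      (UniqueFactorizationMonoid.dvd_of_mem_normalizedFactors hx)
  have hsum_le : (factors.map natDegree).sum ≤ Multiset.card factors * e := by
    have := Multiset.sum_le_card_nsmul (factors.map natDegree) e hdeg_le
    simpa [smul_eq_mul, mul_comm] using this
  have htot : h.natDegree = 2 ^ c * e := by
    rw [hh, Polynomial.natDegree_cyclotomic, hNdef, totient_prod_primes
      (fun q hq => (hT q hq).1), ← hP, hPe]
  have hcardfac : 2 ^ c ≤ Multiset.card factors := by
    have h1 : 2 ^ c * e ≤ Multiset.card factors * e := by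
      calc 2 ^ c * e = h.natDegree := htot.symm
      _ = (factors.map natDegree).sum := hdegsum
      _ ≤ Multiset.card factors * e := hsum_le
    exact Nat.le_of_mul_le_mul_right h1 he
  have hnodup : factors.Nodup :=
    (UniqueFactorizationMonoid.squarefree_iff_nodup_normalizedFactors hh0).mp hsf
  refine ⟨factors.toFinset, ?_, ?_⟩
  · rwa [Multiset.toFinset_card_of_nodup hnodup]
  · intro g hg
    rw [Multiset.mem_toFinset] at hg
    exact ⟨hmem_monic g hg,
      UniqueFactorizationMonoid.irreducible_of_normalized_factor g hg,
      UniqueFactorizationMonoid.dvd_of_mem_normalizedFactors hg⟩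

end AuxLemmas

noncomputable section

def polyResultant {R : Type*} [CommRing R] (m n : ℕ) (P Q : Polynomial R) : R :=
  (Matrix.of fun i j : Fin (m + n) =>
      if (i : ℕ) < n then (if (i : ℕ) ≤ (j : ℕ) then P.coeff ((j : ℕ) - (i : ℕ)) else 0)
      else (if (i : ℕ) - n ≤ (j : ℕ) then Q.coeff ((j : ℕ) - ((i : ℕ) - n)) else 0)).det

def polyDisc {R : Type*} [CommRing R] (f : Polynomial R) : R :=
  (-1) ^ (f.natDegree * (f.natDegree - 1) / 2) *
    polyResultant f.natDegree (f.natDegree - 1) f (Polynomial.derivative f)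

end

open IntermediateField in
/-- **Corollary 1.2.** For every `m ≥ 1` there is an irreducible, monic polynomial
`f ∈ ℤ[X]` such that `ℚ[X]/(f)` is a Galois extension of `ℚ` (expressed via a complex
root `α` of `f`: `ℚ(α)` is Galois over `ℚ`) and such that, for every prime `p` not
dividing `disc(f)`, the reduction `f̄ ∈ 𝔽_p[X]` has at least `m` pairwise distinct monic
irreducible factors. -/
theorem exists_irreducible_with_many_factors_mod_p (m : ℕ) (hm : 1 ≤ m) :
    ∃ f : Polynomial ℤ, f.Monic ∧ Irreducible f ∧
      (∃ α : ℂ, minpoly ℚ α = f.map (Int.castRingHom ℚ) ∧ IsGalois ℚ ℚ⟮α⟯) ∧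
      ∀ p : ℕ, p.Prime → ¬ ((p : ℤ) ∣ polyDisc f) →
        ∃ g : Fin m → Polynomial (ZMod p), Function.Injective g ∧
          ∀ i, (g i).Monic ∧ Irreducible (g i) ∧ g i ∣ f.map (Int.castRingHom (ZMod p)) := by
  classical
  obtain ⟨S, hScard, hS⟩ := exists_odd_primes (m + 1)
  set n := ∏ q ∈ S, q with hndef
  have hn0 : 0 < n := Finset.prod_pos fun q hq => (hS q hq).1.pos
  refine ⟨cyclotomic n ℤ, cyclotomic.monic n ℤ, cyclotomic.irreducible hn0, ?_, ?_⟩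
  · -- Galois part
    set ζ := Complex.exp (2 * Real.pi * Complex.I / n) with hζdef
    have hζ : IsPrimitiveRoot ζ n := Complex.isPrimitiveRoot_exp n hn0.ne'
    refine ⟨ζ, ?_, ?_⟩
    · rw [Polynomial.map_cyclotomic_int]
      exact (Polynomial.cyclotomic_eq_minpoly_rat hζ hn0).symm
    · have hint : IsIntegral ℚ ζ :=
        ⟨X ^ n - 1, monic_X_pow_sub_C 1 hn0.ne', by
          simp [hζ.pow_eq_one]⟩
      have H := IntermediateField.adjoin_simple_toSubalgebra_of_isAlgebraic hint.isAlgebraic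
      have hζ' : IsPrimitiveRoot ζ ((⟨n, hn0⟩ : ℕ+) : ℕ) := hζ
      haveI : IsCyclotomicExtension {n} ℚ ℚ⟮ζ⟯ := by
        refine IsCyclotomicExtension.equiv _ _ _ (h := ?_)
          (.refl : ℚ⟮ζ⟯.toSubalgebra ≃ₐ[ℚ] _)
        rw [H]
        haveI : NeZero n := ⟨hn0.ne'⟩; exact hζ.adjoin_isCyclotomicExtension ℚ
      exact IsCyclotomicExtension.isGalois {n} ℚ ℚ⟮ζ⟯
  · -- mod p part
    intro p pp _
    haveI : Fact p.Prime := ⟨pp⟩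
    set T := S.erase p with hTdef
    have hT : ∀ q ∈ T, q.Prime ∧ 3 ≤ q := fun q hq => hS q (Finset.mem_of_mem_erase hq)
    have hpT : p ∉ T := Finset.notMem_erase p S
    have hTcard : m ≤ T.card := by
      by_cases hpS : p ∈ S
      · rw [hTdef, Finset.card_erase_of_mem hpS, hScard]; omega
      · rw [hTdef, Finset.erase_eq_of_notMem hpS, hScard]; omega
    have hTne : T.Nonempty := Finset.card_pos.mp (by omega)
    obtain ⟨s, hscard, hs⟩ := many_factors hT hpT hTne
    set N := ∏ q ∈ T, q with hNdef
    -- every element of s divides the reduction of f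
    have hdvdf : ∀ g ∈ s, g ∣ (cyclotomic n ℤ).map (Int.castRingHom (ZMod p)) := by
      intro g hg
      rw [Polynomial.map_cyclotomic_int]
      by_cases hpS : p ∈ S
      · have hnN : n = N * p := by
          rw [hndef, hNdef, hTdef, mul_comm, ← Finset.mul_prod_erase S _ hpS]
        have hpN : ¬ p ∣ N := by
          intro h
          obtain ⟨q, hq, hpq⟩ := (pp.prime.dvd_finset_prod_iff id).mp h
          exact hpT ((Nat.prime_dvd_prime_iff_eq pp (hT q hq).1).mp hpq ▸ hq)
        rw [hnN, Polynomial.cyclotomic_mul_prime_eq_pow_of_not_dvd (ZMod p) hpN]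
        exact dvd_pow (hs g hg).2.2 (Nat.sub_ne_zero_of_lt pp.one_lt)
      · have : T = S := Finset.erase_eq_of_notMem hpS
        rw [hndef, ← this, ← hNdef]
        exact (hs g hg).2.2
    -- extract m distinct factors
    have hms : m ≤ s.card := by
      calc m ≤ 2 ^ (m - 1) := by
            have := succ_le_two_pow (m - 1)
            omega
      _ ≤ 2 ^ (T.card - 1) := Nat.pow_le_pow_right (by norm_num) (by omega)
      _ ≤ s.card := hscard
    set l := s.toList with hl
    have hlen : m ≤ l.length := by rwa [Finset.length_toList]
    have hnodup : l.Nodup := Finset.nodup_toList s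
    refine ⟨fun i => l.get ⟨i, by omega⟩, ?_, ?_⟩
    · intro i j hij
      have := List.nodup_iff_injective_get.mp hnodup hij
      simpa [Fin.ext_iff] using this
    · intro i
      have hmem : l.get ⟨i, by omega⟩ ∈ s := by
        rw [← Finset.mem_toList]
        exact List.get_mem l _
      exact ⟨(hs _ hmem).1, (hs _ hmem).2.1, hdvdf _ hmem⟩
end

section
/- For every polynomial f ∈ ℚ[X], the Euler product ζ_f(s) = ∏_{p ∈ 𝒫_f} ζ_{f,p}(s) converges for every s ∈ ℂ with Re(s) > 1, and ζ_f defines a holomorphic function on the half-plane {s ∈ ℂ : Re(s) > 1}. -/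
open Polynomial UniqueFactorizationMonoid

noncomputable section

/-- The set `𝒫_f` of primes `p` such that `f ∈ ℤ_(p)[X]`, i.e. no coefficient of `f`
has a denominator divisible by `p`. -/
def polyPrimes (f : Polynomial ℚ) : Set ℕ :=
  {p | p.Prime ∧ ∀ n : ℕ, ¬ (p ∣ (f.coeff n).den)}

/-- The reduction `f̄ ∈ 𝔽_p[X]` of `f ∈ ℤ_(p)[X] ⊆ ℚ[X]` modulo `p`,
obtained by reducing each coefficient `num/den` to `num * den⁻¹` in `ZMod p`. -/
def redMod (p : ℕ) (f : Polynomial ℚ) : Polynomial (ZMod p) :=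
  f.sum fun n c => Polynomial.C ((c.num : ZMod p) * ((c.den : ZMod p))⁻¹) * Polynomial.X ^ n

/-- The factorization pattern of a polynomial `h` over a field: the multiset of pairs
`(multiplicity, degree)` over the distinct irreducible factors of `h`. -/
def pattern {K : Type*} [Field K] (h : Polynomial K) : Multiset (ℕ × ℕ) := by
  classical
  exact (normalizedFactors h).toFinset.val.map
    fun g => ((normalizedFactors h).count g, g.natDegree)

/-- The factorization pattern of `f ∈ ℚ[X]` modulo a prime `p`. -/
def patternMod (p : ℕ) (f : Polynomial ℚ) : Multiset (ℕ × ℕ) :=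
  if hp : p.Prime then
    haveI : Fact p.Prime := ⟨hp⟩
    pattern (redMod p f)
  else 0

/-- The Euler factor `ζ_{f,p}(s) = ∏_j (1 - p^{-deg(f_j)·s})^{-α_j}`. -/
def eulerFactor (f : Polynomial ℚ) (p : ℕ) (s : ℂ) : ℂ :=
  ((patternMod p f).map fun ad => ((1 - (p : ℂ) ^ (-(ad.2 : ℂ) * s))⁻¹) ^ ad.1).prod

/-- The global zeta function `ζ_f(s) = ∏_{p ∈ 𝒫_f} ζ_{f,p}(s)`. -/
def zetaPoly (f : Polynomial ℚ) (s : ℂ) : ℂ :=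
  ∏' p : polyPrimes f, eulerFactor f ↑p s

end

section Aux

open Complex

/-- One logarithmic term of an Euler factor. -/
noncomputable def gterm (p : ℕ) (s : ℂ) (ad : ℕ × ℕ) : ℂ :=
  -(ad.1 : ℂ) * Complex.log (1 - (p : ℂ) ^ (-(ad.2 : ℂ) * s))

/-- The logarithm of the Euler factor at `p`. -/
noncomputable def glog (f : Polynomial ℚ) (p : ℕ) (s : ℂ) : ℂ :=
  ((patternMod p f).map (gterm p s)).sum

lemma redMod_natDegree_le (p : ℕ) (f : Polynomial ℚ) :
    (redMod p f).natDegree ≤ f.natDegree := by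
  unfold redMod
  rw [Polynomial.sum_def]
  exact Polynomial.natDegree_sum_le_of_forall_le _ _ fun n hn =>
    (Polynomial.natDegree_C_mul_X_pow_le _ n).trans (Polynomial.le_natDegree_of_mem_supp n hn)

lemma pattern_deg_pos {K : Type*} [Field K] {h : Polynomial K} {ad : ℕ × ℕ}
    (had : ad ∈ pattern h) : 1 ≤ ad.2 := by
  classical
  unfold pattern at had
  simp only [Multiset.mem_map] at had
  obtain ⟨g, hg, rfl⟩ := had
  have hg' : g ∈ normalizedFactors h := Multiset.mem_toFinset.mp (Finset.mem_val.mp hg)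
  exact (irreducible_of_normalized_factor g hg').natDegree_pos

lemma pattern_fst_sum_le {K : Type*} [Field K] (h : Polynomial K) :
    ((pattern h).map Prod.fst).sum ≤ h.natDegree := by
  classical
  unfold pattern
  rw [Multiset.map_map]
  have h1 : (((normalizedFactors h).toFinset.val).map
      (fun g => Multiset.count g (normalizedFactors h))).sum
      = Multiset.card (normalizedFactors h) := by
    have := Multiset.toFinset_sum_count_eq (normalizedFactors h); exact this
  have h2 : Multiset.card (normalizedFactors h) ≤ h.natDegree := by
    rcases eq_or_ne h 0 with h0 | h0
    · simp [h0]
    · have hdeg : ((normalizedFactors h).map natDegree).sum = h.natDegree := by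
        rw [← Polynomial.natDegree_multiset_prod _ (zero_notMem_normalizedFactors h)]
        obtain ⟨u, hu⟩ := prod_normalizedFactors h0
        have hprod0 : (normalizedFactors h).prod ≠ 0 := by
          intro h'
          apply h0
          rw [← hu, h', zero_mul]
        conv_rhs => rw [← hu]
        rw [Polynomial.natDegree_mul hprod0 u.ne_zero,
          Polynomial.natDegree_eq_zero_of_isUnit u.isUnit, add_zero]
      calc Multiset.card (normalizedFactors h)
          = ((normalizedFactors h).map (fun _ => 1)).sum := by
            simp [Multiset.map_const']
        _ ≤ ((normalizedFactors h).map natDegree).sum := by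
            refine Multiset.sum_map_le_sum_map _ _ fun g hg => ?_
            exact (irreducible_of_normalized_factor g hg).natDegree_pos
        _ = h.natDegree := hdeg
  exact le_trans (le_of_eq (by exact h1)) h2

lemma patternMod_deg_pos {p : ℕ} (f : Polynomial ℚ) {ad : ℕ × ℕ}
    (h : ad ∈ patternMod p f) : 1 ≤ ad.2 := by
  unfold patternMod at h
  split_ifs at h with hp
  · haveI : Fact p.Prime := ⟨hp⟩
    exact pattern_deg_pos h
  · simp at h

lemma patternMod_count_sum_le (f : Polynomial ℚ) (p : ℕ) :
    ((patternMod p f).map Prod.fst).sum ≤ f.natDegree := by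
  unfold patternMod
  split_ifs with hp
  · haveI : Fact p.Prime := ⟨hp⟩
    exact le_trans (pattern_fst_sum_le (redMod p f)) (redMod_natDegree_le p f)
  · simp

lemma norm_cpow_le {p : ℕ} (hp : p.Prime) {d : ℕ} (hd : 1 ≤ d) {σ : ℝ} (hσ : 1 ≤ σ)
    {s : ℂ} (hs : σ ≤ s.re) :
    ‖(p : ℂ) ^ (-(d : ℂ) * s)‖ ≤ (p : ℝ) ^ (-σ) ∧ (p : ℝ) ^ (-σ) ≤ 1 / 2 := by
  have hp2 : (2 : ℝ) ≤ p := by exact_mod_cast hp.two_le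
  have hp0 : (0 : ℝ) < p := by linarith
  have hd1 : (1 : ℝ) ≤ d := by exact_mod_cast hd
  constructor
  · have hre : ((-(d : ℂ)) * s).re = -((d : ℝ) * s.re) := by
      simp [Complex.mul_re]
    have heq : ‖(p : ℂ) ^ (-(d : ℂ) * s)‖ = (p : ℝ) ^ ((-(d : ℂ) * s).re) := by
      rw [show ((p : ℂ)) = (((p : ℝ) : ℂ)) by push_cast; rfl]
      exact Complex.norm_cpow_eq_rpow_re_of_pos hp0 _
    rw [heq, hre]
    apply Real.rpow_le_rpow_of_exponent_le (by linarith)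
    have : σ ≤ (d : ℝ) * s.re := by nlinarith
    linarith
  · have h2σ : (2 : ℝ) ≤ (p : ℝ) ^ σ := by
      calc (2 : ℝ) = 2 ^ (1 : ℝ) := (Real.rpow_one 2).symm
        _ ≤ 2 ^ σ := Real.rpow_le_rpow_of_exponent_le one_le_two hσ
        _ ≤ (p : ℝ) ^ σ := Real.rpow_le_rpow (by norm_num) hp2 (by linarith)
    rw [Real.rpow_neg hp0.le, one_div]
    exact inv_anti₀ two_pos h2σ

lemma msum_bound (m : Multiset (ℕ × ℕ)) (φ : ℕ × ℕ → ℂ) (c : ℝ) (hc : 0 ≤ c)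
    (h : ∀ ad ∈ m, ‖φ ad‖ ≤ (ad.1 : ℝ) * c) :
    ‖(m.map φ).sum‖ ≤ (((m.map Prod.fst).sum : ℕ) : ℝ) * c := by
  induction m using Multiset.induction_on with
  | empty => simp
  | cons a t ih =>
    simp only [Multiset.map_cons, Multiset.sum_cons]
    calc ‖φ a + (t.map φ).sum‖ ≤ ‖φ a‖ + ‖(t.map φ).sum‖ := norm_add_le _ _
      _ ≤ (a.1 : ℝ) * c + (((t.map Prod.fst).sum : ℕ) : ℝ) * c :=
          add_le_add (h a (Multiset.mem_cons_self a t))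
            (ih fun ad had => h ad (Multiset.mem_cons_of_mem had))
      _ = (((a.1 + (t.map Prod.fst).sum : ℕ) : ℝ)) * c := by push_cast; ring

lemma glog_norm_le (f : Polynomial ℚ) {p : ℕ} (hp : p.Prime) {σ : ℝ} (hσ : 1 ≤ σ)
    {s : ℂ} (hs : σ ≤ s.re) :
    ‖glog f p s‖ ≤ (f.natDegree : ℝ) * (3 / 2 * (p : ℝ) ^ (-σ)) := by
  have hc : (0 : ℝ) ≤ 3 / 2 * (p : ℝ) ^ (-σ) := by positivity
  refine le_trans (msum_bound _ _ _ hc ?_) ?_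
  · intro ad had
    have hd := patternMod_deg_pos f had
    obtain ⟨h1, h2⟩ := norm_cpow_le hp hd hσ hs
    set X := (p : ℂ) ^ (-(ad.2 : ℂ) * s) with hX
    have hlog : ‖Complex.log (1 - X)‖ ≤ 3 / 2 * (p : ℝ) ^ (-σ) := by
      have hz : ‖-X‖ ≤ 1 / 2 := by rw [norm_neg]; exact h1.trans h2
      have := Complex.norm_log_one_add_half_le_self hz
      rw [show (1 : ℂ) + -X = 1 - X by ring, norm_neg] at this
      calc ‖Complex.log (1 - X)‖ ≤ 3 / 2 * ‖X‖ := this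
        _ ≤ 3 / 2 * (p : ℝ) ^ (-σ) := by nlinarith [norm_nonneg X]
    show ‖-(ad.1 : ℂ) * Complex.log (1 - X)‖ ≤ (ad.1 : ℝ) * (3 / 2 * (p : ℝ) ^ (-σ))
    rw [norm_mul, norm_neg, Complex.norm_natCast]
    exact mul_le_mul_of_nonneg_left hlog (Nat.cast_nonneg _)
  · exact mul_le_mul_of_nonneg_right
      (by exact_mod_cast patternMod_count_sum_le f p) hc

lemma one_sub_cpow_ne_zero (f : Polynomial ℚ) {p : ℕ} (hp : p.Prime)
    {s : ℂ} (hs : 1 ≤ s.re) {ad : ℕ × ℕ} (had : ad ∈ patternMod p f) :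
    (1 : ℂ) - (p : ℂ) ^ (-(ad.2 : ℂ) * s) ≠ 0 := by
  obtain ⟨h1, h2⟩ := norm_cpow_le hp (patternMod_deg_pos f had) le_rfl hs
  intro h
  have := sub_eq_zero.mp h
  have h3 : ‖(p : ℂ) ^ (-(ad.2 : ℂ) * s)‖ = 1 := by rw [← this]; simp
  rw [h3] at h1
  linarith [h1.trans h2]

lemma exp_msum (m : Multiset (ℕ × ℕ)) (x : ℕ × ℕ → ℂ) (hx : ∀ ad ∈ m, 1 - x ad ≠ 0) :
    Complex.exp ((m.map fun ad => -(ad.1 : ℂ) * Complex.log (1 - x ad)).sum)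
      = (m.map fun ad => ((1 - x ad)⁻¹) ^ ad.1).prod := by
  induction m using Multiset.induction_on with
  | empty => simp
  | cons a t ih =>
    simp only [Multiset.map_cons, Multiset.sum_cons, Multiset.prod_cons]
    rw [Complex.exp_add, ih fun ad had => hx ad (Multiset.mem_cons_of_mem had)]
    congr 1
    have hne := hx a (Multiset.mem_cons_self a t)
    rw [show -(a.1 : ℂ) * Complex.log (1 - x a) = (a.1 : ℂ) * (-Complex.log (1 - x a)) by ring,
      Complex.exp_nat_mul, Complex.exp_neg, Complex.exp_log hne]

lemma eulerFactor_eq_exp (f : Polynomial ℚ) {p : ℕ} (hp : p.Prime) {s : ℂ} (hs : 1 ≤ s.re) :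
    eulerFactor f p s = Complex.exp (glog f p s) := by
  rw [eulerFactor, glog]
  rw [show (patternMod p f).map (gterm p s)
      = (patternMod p f).map (fun ad => -(ad.1 : ℂ)
        * Complex.log (1 - (fun ad : ℕ × ℕ => (p : ℂ) ^ (-(ad.2 : ℂ) * s)) ad)) from rfl]
  rw [exp_msum _ _ fun ad had => one_sub_cpow_ne_zero f hp hs had]

lemma glog_summable (f : Polynomial ℚ) {σ : ℝ} (hσ : 1 < σ) {s : ℂ} (hs : σ ≤ s.re) :
    Summable fun p : polyPrimes f => glog f ↑p s := by
  refine Summable.of_norm_bounded (g :=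
    fun p : polyPrimes f => (f.natDegree : ℝ) * (3 / 2 * ((p : ℕ) : ℝ) ^ (-σ))) ?_ ?_
  · have h0 : Summable fun n : ℕ => (n : ℝ) ^ (-σ) :=
      Real.summable_nat_rpow.mpr (by linarith)
    exact ((h0.subtype (polyPrimes f)).mul_left (3 / 2)).mul_left _
  · exact fun p => glog_norm_le f p.2.1 hσ.le hs

lemma eulerFactor_hasProd (f : Polynomial ℚ) {s : ℂ} (hs : 1 < s.re) :
    HasProd (fun p : polyPrimes f => eulerFactor f ↑p s)
      (Complex.exp (∑' p : polyPrimes f, glog f ↑p s)) := by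
  have hsum := glog_summable f hs le_rfl
  exact hsum.hasSum.cexp.congr_fun fun p =>
    eulerFactor_eq_exp f p.2.1 hs.le

lemma glog_differentiableOn (f : Polynomial ℚ) {p : ℕ} (hp : p.Prime) {σ : ℝ} (hσ : 1 ≤ σ) :
    DifferentiableOn ℂ (fun s => glog f p s) {s : ℂ | σ < s.re} := by
  have key : ∀ (m : Multiset (ℕ × ℕ)), (∀ ad ∈ m, 1 ≤ ad.2) →
      DifferentiableOn ℂ (fun s => (m.map (gterm p s)).sum) {s : ℂ | σ < s.re} := by
    intro m
    induction m using Multiset.induction_on with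
    | empty => intro _; simpa using differentiableOn_const (0 : ℂ)
    | cons a t ih =>
      intro hm
      have hterm : DifferentiableOn ℂ (fun s => gterm p s a) {s : ℂ | σ < s.re} := by
        intro s hsmem
        apply DifferentiableAt.differentiableWithinAt
        have hsre : σ < s.re := hsmem
        have hne : (p : ℂ) ≠ 0 := Nat.cast_ne_zero.mpr hp.pos.ne'
        have hpow : DifferentiableAt ℂ (fun s : ℂ => (p : ℂ) ^ (-(a.2 : ℂ) * s)) s := by
          have heq : (fun s : ℂ => (p : ℂ) ^ (-(a.2 : ℂ) * s))
              = fun s => Complex.exp ((Complex.log p * -(a.2 : ℂ)) * s) := by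
            funext w
            rw [Complex.cpow_def_of_ne_zero hne]
            congr 1
            ring
          rw [heq]
          exact (Complex.differentiable_exp.comp (differentiable_id.const_mul _)) s
        have hmem : (1 : ℂ) - (p : ℂ) ^ (-(a.2 : ℂ) * s) ∈ Complex.slitPlane := by
          obtain ⟨h1, h2⟩ := norm_cpow_le hp (hm a (Multiset.mem_cons_self a t)) hσ
            (le_of_lt hsre)
          rw [Complex.mem_slitPlane_iff]
          left
          have hre : ((1 : ℂ) - (p : ℂ) ^ (-(a.2 : ℂ) * s)).re
              = 1 - ((p : ℂ) ^ (-(a.2 : ℂ) * s)).re := by simp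
          have hle : ((p : ℂ) ^ (-(a.2 : ℂ) * s)).re ≤ ‖(p : ℂ) ^ (-(a.2 : ℂ) * s)‖ :=
            Complex.re_le_norm _
          rw [hre]
          linarith [hle.trans (h1.trans h2)]
        exact (((Complex.differentiableAt_log hmem).comp s
          ((differentiableAt_const (1 : ℂ)).sub hpow)).const_mul _)
      have hrest := ih fun ad had => hm ad (Multiset.mem_cons_of_mem had)
      simpa only [Multiset.map_cons, Multiset.sum_cons, Pi.add_def] using hterm.add hrest
  exact key _ fun ad had => patternMod_deg_pos f had

end Aux

/-- **Lemma 3.1.** For every `f ∈ ℚ[X]`, the Euler product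
`ζ_f(s) = ∏_{p ∈ 𝒫_f} ζ_{f,p}(s)` converges for every `s` with `Re(s) > 1`,
and `ζ_f` defines a holomorphic function on the half-plane `{Re(s) > 1}`. -/
theorem zetaPoly_multipliable_and_holomorphic (f : Polynomial ℚ) :
    (∀ s : ℂ, 1 < s.re → Multipliable fun p : polyPrimes f => eulerFactor f ↑p s) ∧
      DifferentiableOn ℂ (zetaPoly f) {s : ℂ | 1 < s.re} := by
  constructor
  · exact fun s hs => (eulerFactor_hasProd f hs).multipliable
  · intro s₀ hs₀
    have hs₀' : 1 < s₀.re := hs₀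
    set σ : ℝ := (1 + s₀.re) / 2 with hσdef
    have hσ1 : 1 < σ := by rw [hσdef]; linarith
    have hσ0 : σ < s₀.re := by rw [hσdef]; linarith
    set U' : Set ℂ := {s : ℂ | σ < s.re} with hU'
    have hopen : IsOpen U' := isOpen_lt continuous_const Complex.continuous_re
    have hmem : s₀ ∈ U' := hσ0
    have hu : Summable fun p : polyPrimes f =>
        (f.natDegree : ℝ) * (3 / 2 * ((p : ℕ) : ℝ) ^ (-σ)) := by
      have h0 : Summable fun n : ℕ => (n : ℝ) ^ (-σ) :=
        Real.summable_nat_rpow.mpr (by linarith)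
      exact ((h0.subtype (polyPrimes f)).mul_left (3 / 2)).mul_left _
    have hdiff : DifferentiableOn ℂ (fun s => ∑' p : polyPrimes f, glog f ↑p s) U' := by
      refine Complex.differentiableOn_tsum_of_summable_norm hu
        (fun p => glog_differentiableOn f p.2.1 hσ1.le) hopen ?_
      intro p w hw
      exact glog_norm_le f p.2.1 hσ1.le (le_of_lt hw)
    have heq : Set.EqOn (zetaPoly f)
        (fun s => Complex.exp (∑' p : polyPrimes f, glog f ↑p s)) U' := by
      intro s hs
      have hs1 : 1 < s.re := lt_trans hσ1 hs
      exact (eulerFactor_hasProd f hs1).tprod_eq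
    have hz : DifferentiableOn ℂ (zetaPoly f) U' :=
      (Complex.differentiable_exp.comp_differentiableOn hdiff).congr heq
    exact ((hz.differentiableAt (hopen.mem_nhds hmem)).differentiableWithinAt)
end

section
/- For f ∈ ℚ[X], let 𝒵_f ⊆ 𝒫_f be the set of those primes p ∈ 𝒫_f such that the reduction f̄ ∈ 𝔽_p[X] has a zero in 𝔽_p. Then 𝒵_f has finite cardinality if and only if deg(f) = 0, i.e., if and only if f is a nonzero constant polynomial. -/
open Polynomial UniqueFactorizationMonoid

noncomputable section SchurAux

lemma schur_int (g : Polynomial ℤ) (hg : 1 ≤ g.natDegree) :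
    {p : ℕ | p.Prime ∧ ∃ n : ℤ, (p : ℤ) ∣ g.eval n}.Infinite := by
  by_contra h
  rw [Set.not_infinite] at h
  set c : ℤ := g.eval 0 with hc
  by_cases hc0 : c = 0
  · exact absurd (Nat.infinite_setOf_prime.mono (fun p hp =>
      Set.mem_setOf.mpr ⟨hp, 0, hc ▸ hc0 ▸ dvd_zero _⟩)) (Set.not_infinite.mpr h)
  · set T := h.toFinset with hT
    set P : ℤ := ∏ p ∈ T, (p : ℤ) with hP
    have hPne : P ≠ 0 := Finset.prod_ne_zero_iff.mpr fun p hp => by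
      exact_mod_cast (h.mem_toFinset.mp hp).1.ne_zero
    set m : ℤ := c * P with hm
    have hmne : m ≠ 0 := mul_ne_zero hc0 hPne
    set q : Polynomial ℤ := g.comp (Polynomial.C m * Polynomial.X) with hq
    have hqdeg : 1 ≤ q.natDegree := by
      rw [hq, natDegree_comp, natDegree_C_mul hmne, natDegree_X, mul_one]; exact hg
    have hq1 : q - Polynomial.C c ≠ 0 := fun hcon => by
      have h0 : q.natDegree = 0 := (sub_eq_zero.mp hcon) ▸ natDegree_C c
      omega
    have hq2 : q + Polynomial.C c ≠ 0 := fun hcon => by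
      have h1 : q = Polynomial.C (-c) := by
        rw [map_neg]; linear_combination (norm := ring_nf) hcon
      have h0 : q.natDegree = 0 := h1 ▸ natDegree_C (-c)
      omega
    -- choose k avoiding roots of q - C c and q + C c
    have hfin : ({x | (q - Polynomial.C c).IsRoot x} ∪
        {x | (q + Polynomial.C c).IsRoot x}).Finite :=
      (finite_setOf_isRoot hq1).union (finite_setOf_isRoot hq2)
    obtain ⟨k, hk⟩ := hfin.infinite_compl.nonempty
    simp only [Set.mem_compl_iff, Set.mem_union, Set.mem_setOf_eq, IsRoot.def, not_or] at hk
    obtain ⟨hk1, hk2⟩ := hk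
    set v : ℤ := g.eval (m * k) with hv
    have hvq : q.eval k = v := by rw [hq, eval_comp]; simp [hv]
    have hvc : v ≠ c := fun hcon => hk1 (by simp [hvq, hcon])
    have hvnc : v ≠ -c := fun hcon => hk2 (by simp [hvq, hcon])
    -- m * k ∣ v - c
    have hdvd : m * k ∣ v - c := by
      have := sub_dvd_eval_sub (m * k) 0 g
      simpa [hv, hc] using this
    have hdvd2 : c * P ∣ v - c := dvd_trans (Dvd.intro k rfl) hdvd
    obtain ⟨s, hs⟩ := hdvd2
    set w : ℤ := 1 + P * s with hw
    have hcw : c * w = v := by rw [hw]; linear_combination -hs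
    have hwna : w.natAbs ≠ 1 := by
      intro hna
      rcases Int.natAbs_eq_iff.mp hna with h1 | h1
      · exact hvc (by rw [← hcw, h1]; push_cast; ring)
      · exact hvnc (by rw [← hcw, h1]; push_cast; ring)
    obtain ⟨p, hp, hpw⟩ := Int.exists_prime_and_dvd hwna
    set pn := p.natAbs with hpn
    have hpnp : pn.Prime := Int.prime_iff_natAbs_prime.mp hp
    have hpnw : (pn : ℤ) ∣ w := (Int.natAbs_dvd).mpr hpw
    have hmem : pn ∈ T := h.mem_toFinset.mpr ⟨hpnp, m * k, by
      rw [← hv, ← hcw]; exact hpnw.mul_left c⟩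
    have hpP : (pn : ℤ) ∣ P := Finset.dvd_prod_of_mem _ hmem
    have hone : (pn : ℤ) ∣ 1 := by
      have := dvd_sub hpnw (hpP.mul_right s)
      simpa [hw] using this
    exact hpnp.one_lt.ne' (by exact_mod_cast Int.eq_one_of_dvd_one (by positivity) hone)

noncomputable def auxD (f : Polynomial ℚ) : ℕ := ∏ n ∈ f.support, (f.coeff n).den

lemma den_dvd_auxD (f : Polynomial ℚ) (n : ℕ) : (f.coeff n).den ∣ auxD f := by
  by_cases h : n ∈ f.support
  · exact Finset.dvd_prod_of_mem _ h
  · rw [Polynomial.notMem_support_iff.mp h]; simp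

lemma auxD_pos (f : Polynomial ℚ) : 0 < auxD f :=
  Finset.prod_pos fun n _ => (f.coeff n).pos

noncomputable def auxG (f : Polynomial ℚ) : Polynomial ℤ :=
  ∑ n ∈ f.support, Polynomial.monomial n
    ((f.coeff n).num * ((auxD f / (f.coeff n).den : ℕ) : ℤ))

lemma auxG_coeff (f : Polynomial ℚ) (k : ℕ) :
    (auxG f).coeff k = if k ∈ f.support then
      (f.coeff k).num * ((auxD f / (f.coeff k).den : ℕ) : ℤ) else 0 := by
  rw [auxG, Polynomial.finset_sum_coeff]
  simp only [Polynomial.coeff_monomial]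
  rw [Finset.sum_ite_eq' f.support k]

lemma auxG_natDegree_le (f : Polynomial ℚ) : (auxG f).natDegree ≤ f.natDegree := by
  apply Polynomial.natDegree_le_iff_coeff_eq_zero.mpr
  intro k hk
  rw [auxG_coeff]
  rw [if_neg]
  intro hmem
  exact (Polynomial.le_natDegree_of_mem_supp k hmem).not_gt hk

lemma auxG_natDegree (f : Polynomial ℚ) (hf : f ≠ 0) : 1 ≤ f.natDegree →
    1 ≤ (auxG f).natDegree := by
  intro h
  have hco : (auxG f).coeff f.natDegree ≠ 0 := by
    rw [auxG_coeff, if_pos (Polynomial.natDegree_mem_support_of_nonzero hf)]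
    apply mul_ne_zero
    · exact_mod_cast Rat.num_ne_zero.mpr (Polynomial.leadingCoeff_ne_zero.mpr hf)
    · have : 0 < auxD f / (f.coeff f.natDegree).den :=
        Nat.div_pos (Nat.le_of_dvd (auxD_pos f) (den_dvd_auxD f _)) (f.coeff f.natDegree).pos
      exact_mod_cast this.ne'
  calc 1 ≤ f.natDegree := h
    _ ≤ (auxG f).natDegree := Polynomial.le_natDegree_of_ne_zero hco

lemma key_eval (f : Polynomial ℚ) (p : ℕ) [Fact p.Prime] (hpD : ¬ p ∣ auxD f)
    (x : ZMod p) :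
    ((auxG f).map (Int.castRingHom (ZMod p))).eval x =
      (auxD f : ZMod p) * (redMod p f).eval x := by
  have hpprime := (Fact.out : p.Prime)
  rw [redMod, Polynomial.sum_def, auxG, Polynomial.map_sum, Polynomial.eval_finset_sum,
    Polynomial.eval_finset_sum, Finset.mul_sum]
  apply Finset.sum_congr rfl
  intro n _
  rw [Polynomial.map_monomial, Polynomial.eval_monomial]
  simp only [Polynomial.eval_mul, Polynomial.eval_C, Polynomial.eval_pow, Polynomial.eval_X,
    eq_intCast]
  have hden : ¬ p ∣ (f.coeff n).den := fun hd => hpD (hd.trans (den_dvd_auxD f n))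
  have hdenne : ((f.coeff n).den : ZMod p) ≠ 0 := by
    rw [Ne, ZMod.natCast_eq_zero_iff]; exact hden
  have hdd : ((f.coeff n).den : ZMod p) * (((f.coeff n).den : ZMod p))⁻¹ = 1 :=
    ZMod.mul_inv_of_unit _ (hdenne.isUnit)
  have hD : (auxD f : ZMod p) =
      ((f.coeff n).den : ZMod p) * ((auxD f / (f.coeff n).den : ℕ) : ZMod p) := by
    rw [← Nat.cast_mul, Nat.mul_div_cancel' (den_dvd_auxD f n)]
  rw [Int.cast_mul, Int.cast_natCast, hD]
  linear_combination (-(((f.coeff n).num : ZMod p) *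
    ((auxD f / (f.coeff n).den : ℕ) : ZMod p) * x ^ n)) * hdd

end SchurAux

/-- **Corollary 4.4 (Schur).** For `f ∈ ℚ[X]`, let `𝒵_f ⊆ 𝒫_f` be the set of primes
`p ∈ 𝒫_f` such that the reduction `f̄ ∈ 𝔽_p[X]` has a zero in `𝔽_p`. Then `𝒵_f` is
finite if and only if `deg(f) = 0`, i.e. `f` is a nonzero constant. -/
theorem finite_zeros_mod_p_iff_degree_eq_zero (f : Polynomial ℚ) :
    {p : ℕ | p ∈ polyPrimes f ∧ ∃ x : ZMod p, (redMod p f).eval x = 0}.Finite ↔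
      f.degree = 0 := by
  constructor
  · intro hfin
    by_contra hdeg
    by_cases hf0 : f = 0
    · subst hf0
      refine (Nat.infinite_setOf_prime.mono fun p hp => ?_) hfin
      refine ⟨⟨hp, fun n => ?_⟩, 0, ?_⟩
      · simp only [Polynomial.coeff_zero, Rat.den_ofNat, Nat.dvd_one]
        exact hp.one_lt.ne'
      · rw [redMod, Polynomial.sum_zero_index, Polynomial.eval_zero]
    · have hnd : 1 ≤ f.natDegree := by
        rcases Nat.eq_zero_or_pos f.natDegree with h0 | h1
        · exact absurd (by rw [Polynomial.degree_eq_natDegree hf0, h0]; rfl) hdeg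
        · exact h1
      have hinf := schur_int (auxG f) (auxG_natDegree f hf0 hnd)
      have hDfin : {p : ℕ | p ∣ auxD f}.Finite :=
        (Set.finite_Iic (auxD f)).subset fun p hp => Nat.le_of_dvd (auxD_pos f) hp
      refine ((hinf.diff hDfin).mono fun p hp => ?_) hfin
      obtain ⟨⟨hprime, n, hdvd⟩, hpD⟩ := hp
      rw [Set.mem_setOf_eq] at hpD
      haveI : Fact p.Prime := ⟨hprime⟩
      refine ⟨⟨hprime, fun k hk => hpD (hk.trans (den_dvd_auxD f k))⟩, (n : ZMod p), ?_⟩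
      have h1 : ((auxG f).map (Int.castRingHom (ZMod p))).eval ((n : ℤ) : ZMod p) = 0 := by
        rw [Polynomial.eval_intCast_map]
        simpa using (ZMod.intCast_zmod_eq_zero_iff_dvd _ p).mpr hdvd
      have h2 := key_eval f p hpD ((n : ℤ) : ZMod p)
      rw [h1] at h2
      have hDne : (auxD f : ZMod p) ≠ 0 := by
        rw [Ne, ZMod.natCast_eq_zero_iff]; exact hpD
      have := (mul_eq_zero.mp h2.symm).resolve_left hDne
      simpa using this
  · intro hdeg
    have hf0 : f ≠ 0 := fun h => by simp [h] at hdeg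
    have hfC : f = Polynomial.C (f.coeff 0) := Polynomial.eq_C_of_degree_le_zero hdeg.le
    have hcne : f.coeff 0 ≠ 0 := fun h => hf0 (by rw [hfC, h, map_zero])
    apply (Set.finite_Iic (f.coeff 0).num.natAbs).subset
    rintro p ⟨⟨hp, hden⟩, x, hx⟩
    haveI : Fact p.Prime := ⟨hp⟩
    have hred : redMod p f =
        Polynomial.C (((f.coeff 0).num : ZMod p) * (((f.coeff 0).den : ZMod p))⁻¹) := by
      conv_lhs => rw [hfC]
      rw [redMod, Polynomial.sum_C_index (by simp)]
      simp
    rw [hred, Polynomial.eval_C] at hx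
    have hdenne : ((f.coeff 0).den : ZMod p) ≠ 0 := by
      rw [Ne, ZMod.natCast_eq_zero_iff]; exact hden 0
    have hnum : ((f.coeff 0).num : ZMod p) = 0 := by
      rcases mul_eq_zero.mp hx with h | h
      · exact h
      · exact absurd (inv_eq_zero.mp h) hdenne
    have hpdvd : (p : ℤ) ∣ (f.coeff 0).num := (ZMod.intCast_zmod_eq_zero_iff_dvd _ p).mp hnum
    have : p ∣ (f.coeff 0).num.natAbs := Int.natAbs_dvd_natAbs.mpr (by simpa using hpdvd)
    exact Nat.le_of_dvd (Int.natAbs_pos.mpr (Rat.num_ne_zero.mpr hcne)) this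
end
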